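/- Let I ⊆ (0,∞) be an interval, H : I → ℝ a continuous function, and G : I → ℝ a differentiable function with G'(x) = x·H(x) for all x ∈ I. Then: (a) if 𝒦 : I → ℝ is differentiable and satisfies 𝒦'(x) + 𝒦(x)/x = 2·H(x) for all x ∈ I, there exists a constant c ∈ ℝ with x·𝒦(x) = 2·G(x) + c for all x ∈ I; (b) conversely, for every c ∈ ℝ the function 𝒦(x) := (2·G(x) + c)/x is differentiable on I and satisfies 𝒦'(x) + 𝒦(x)/x = 2·H(x) for all x ∈ I. Hence the rotational surfaces with mean curvature H(x) form a one-parameter family, determined by x·𝒦(x) = 2∫x·H(x)dx. -/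
import Mathlib


/-- Prescribing mean curvature H(x): the momenta 𝒦 satisfying
𝒦'(x) + 𝒦(x)/x = 2H(x) are exactly the functions with x·𝒦(x) = 2·G(x) + c,
G being an antiderivative of x·H(x). -/
theorem stmt_4 (I : Set ℝ) (hI : I.OrdConnected) (hI0 : I ⊆ Set.Ioi 0)
    (H G : ℝ → ℝ) (hH : ContinuousOn H I)
    (hG : ∀ x ∈ I, HasDerivAt G (x * H x) x) :
    (∀ K : ℝ → ℝ, (∀ x ∈ I, DifferentiableAt ℝ K x) →
        (∀ x ∈ I, deriv K x + K x / x = 2 * H x) →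
        ∃ c : ℝ, ∀ x ∈ I, x * K x = 2 * G x + c) ∧
    (∀ c : ℝ, (∀ x ∈ I, DifferentiableAt ℝ (fun y => (2 * G y + c) / y) x) ∧
        (∀ x ∈ I, deriv (fun y => (2 * G y + c) / y) x
            + ((2 * G x + c) / x) / x = 2 * H x)) := by
  have hconv : Convex ℝ I := hI.convex
  constructor
  · intro K hKdiff hKode
    rcases I.eq_empty_or_nonempty with rfl | ⟨x0, hx0⟩
    · exact ⟨0, fun x hx => absurd hx (Set.notMem_empty x)⟩
    refine ⟨x0 * K x0 - 2 * G x0, fun x hx => ?_⟩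
    -- F y = y * K y - 2 * G y has zero derivative on I
    have key : ∀ y ∈ I, HasDerivWithinAt (fun y => y * K y - 2 * G y) 0 I y := by
      intro y hy
      have hy0 : (0:ℝ) < y := hI0 hy
      have hK : HasDerivAt K (deriv K y) y := (hKdiff y hy).hasDerivAt
      have h1 : HasDerivAt (fun y => y * K y - 2 * G y)
          (1 * K y + y * deriv K y - 2 * (y * H y)) y :=
        ((hasDerivAt_id y).mul hK).sub ((hG y hy).const_mul 2)
      have he : 1 * K y + y * deriv K y - 2 * (y * H y) = 0 := by
        have := hKode y hy
        have : y * (deriv K y + K y / y) = y * (2 * H y) := by rw [this]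
        field_simp at this
        nlinarith [this]
      rw [he] at h1
      exact h1.hasDerivWithinAt
    have := hconv.norm_image_sub_le_of_norm_hasDerivWithin_le
      (f' := fun _ => (0:ℝ)) (C := 0) key (fun y _ => by simp) hx0 hx
    simp only [Real.norm_eq_abs, zero_mul] at this
    have h1 : (x * K x - 2 * G x) - (x0 * K x0 - 2 * G x0) = 0 :=
      abs_eq_zero.mp (le_antisymm this (abs_nonneg _))
    linarith
  · intro c
    have hd : ∀ x ∈ I, HasDerivAt (fun y => (2 * G y + c) / y)
        ((2 * (x * H x) * x - (2 * G x + c) * 1) / x ^ 2) x := by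
      intro x hx
      have hx0 : x ≠ 0 := ne_of_gt (hI0 hx)
      exact (((hG x hx).const_mul 2).add_const c).div (hasDerivAt_id x) hx0
    constructor
    · exact fun x hx => (hd x hx).differentiableAt
    · intro x hx
      have hx0 : (0:ℝ) < x := hI0 hx
      rw [(hd x hx).deriv]
      field_simp
      ring
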